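/- (Imbens–Angrist identification with a valid instrument.) Let (Ω, 𝔉, P) be a probability space, Y₁, Y₀ : Ω → ℝ integrable potential outcomes, D₁, D₀ : Ω → {0,1} potential treatments, and Z : Ω → {0,1} a binary instrument. Let D = D₁·Z + D₀·(1−Z) and Y = Y₁·D + Y₀·(1−D). Assume: (exclusion is built in since Y₁, Y₀ do not depend on Z); monotonicity D₁ ≥ D₀ almost surely; independence of Z from (Y₁, Y₀, D₁, D₀); relevance P(D₁ > D₀) > 0; and 0 < P(Z = 1) < 1. Then E[Y₁ − Y₀ | D₁ > D₀] = (E[Y | Z = 1] − E[Y | Z = 0]) / (E[D | Z = 1] − E[D | Z = 0]). -/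

import Mathlib

open MeasureTheory ProbabilityTheory

/-- `pr μ A` is the probability of the event `A`, as a real number. -/
noncomputable def pr {Ω : Type*} [MeasurableSpace Ω] (μ : Measure Ω) (A : Set Ω) : ℝ :=
  (μ A).toReal

/-- `prCond μ A B` is the conditional probability `P(A | B) = P(A ∩ B) / P(B)`. -/
noncomputable def prCond {Ω : Type*} [MeasurableSpace Ω] (μ : Measure Ω) (A B : Set Ω) : ℝ :=
  pr μ (A ∩ B) / pr μ B

/-- `cexp μ A f` is the conditional expectation `E[f | A]` of `f` given the event `A`. -/
noncomputable def cexp {Ω : Type*} [MeasurableSpace Ω] (μ : Measure Ω) (A : Set Ω)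
    (f : Ω → ℝ) : ℝ :=
  ∫ ω, f ω ∂(μ[|A])

/-- The event `{ω | f ω = c}`. -/
def evEq {Ω : Type*} (f : Ω → ℝ) (c : ℝ) : Set Ω := {ω | f ω = c}

/-- Always takers: `D₁ = D₀ = 1`. -/
def ATset {Ω : Type*} (D1 D0 : Ω → ℝ) : Set Ω := {ω | D1 ω = 1 ∧ D0 ω = 1}

/-- Never takers: `D₁ = D₀ = 0`. -/
def NTset {Ω : Type*} (D1 D0 : Ω → ℝ) : Set Ω := {ω | D1 ω = 0 ∧ D0 ω = 0}

/-- Compliers: `D₁ = 1`, `D₀ = 0`. -/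
def CPset {Ω : Type*} (D1 D0 : Ω → ℝ) : Set Ω := {ω | D1 ω = 1 ∧ D0 ω = 0}

lemma cexp_eq_div {Ω : Type*} [MeasurableSpace Ω] (μ : Measure Ω) (A : Set Ω) (f : Ω → ℝ) :
    cexp μ A f = (∫ ω in A, f ω ∂μ) / pr μ A := by
  rw [cexp, ProbabilityTheory.cond, integral_smul_measure, ENNReal.toReal_inv, smul_eq_mul,
    div_eq_inv_mul, pr]

/-- Key independence step: integrating a function of `W` over an event defined by `Z`. -/
lemma indep_setIntegral {Ω : Type*} [MeasurableSpace Ω] (μ : Measure Ω) [IsProbabilityMeasure μ]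
    (Z : Ω → ℝ) (W : Ω → ℝ × ℝ × ℝ × ℝ) (hZm : Measurable Z)
    (hindep : IndepFun Z W μ) (c : ℝ) (f : ℝ × ℝ × ℝ × ℝ → ℝ) (hf : Measurable f)
    (hfint : Integrable (fun ω => f (W ω)) μ) :
    ∫ ω in evEq Z c, f (W ω) ∂μ = pr μ (evEq Z c) * ∫ ω, f (W ω) ∂μ := by
  have hAm : MeasurableSet (evEq Z c) := hZm (measurableSet_singleton c)
  set χ : ℝ → ℝ := Set.indicator {c} 1 with hχ
  have hχm : Measurable χ := measurable_one.indicator (measurableSet_singleton c)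
  have hind : IndepFun (χ ∘ Z) (f ∘ W) μ := hindep.comp hχm hf
  have hχint : Integrable (χ ∘ Z) μ := by
    refine (integrable_const (1 : ℝ)).mono' (hχm.comp hZm).aestronglyMeasurable ?_
    refine ae_of_all _ fun ω => ?_
    by_cases h : Z ω ∈ ({c} : Set ℝ) <;> simp_all [χ, Function.comp, Set.indicator_apply, Pi.single_apply]
  have hmul := hind.integral_mul_eq_mul_integral hχint.aestronglyMeasurable hfint.aestronglyMeasurable
  have h1 : (fun ω => ((χ ∘ Z) * (f ∘ W)) ω)
      = Set.indicator (evEq Z c) (fun ω => f (W ω)) := by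
    funext ω
    by_cases h : Z ω = c <;>
      simp [χ, Function.comp, Set.indicator_apply, evEq, h]
  have h2 : ∫ ω, (χ ∘ Z) ω ∂μ = pr μ (evEq Z c) := by
    have : (fun ω => (χ ∘ Z) ω) = Set.indicator (evEq Z c) (1 : Ω → ℝ) := by
      funext ω
      by_cases h : Z ω = c <;> simp [χ, Function.comp, Set.indicator_apply, evEq, h]
    rw [show (χ ∘ Z) = Set.indicator (evEq Z c) (1 : Ω → ℝ) from this,
      integral_indicator_one hAm, pr, measureReal_def]
  calc ∫ ω in evEq Z c, f (W ω) ∂μ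
      = ∫ ω, Set.indicator (evEq Z c) (fun ω => f (W ω)) ω ∂μ :=
        (integral_indicator hAm).symm
    _ = ∫ ω, ((χ ∘ Z) * (f ∘ W)) ω ∂μ := by rw [h1]
    _ = (∫ ω, (χ ∘ Z) ω ∂μ) * ∫ ω, (f ∘ W) ω ∂μ := hmul
    _ = pr μ (evEq Z c) * ∫ ω, f (W ω) ∂μ := by rw [h2]; rfl

/-- Imbens–Angrist: with a valid instrument, the LATE equals
the Wald (IV) estimand. -/
theorem imbens_angrist_late_identification
    {Ω : Type*} [MeasurableSpace Ω] (μ : Measure Ω) [IsProbabilityMeasure μ]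
    (Y1 Y0 D1 D0 Z : Ω → ℝ)
    (hY1int : Integrable Y1 μ) (hY0int : Integrable Y0 μ)
    (hY1m : Measurable Y1) (hY0m : Measurable Y0)
    (hD1v : ∀ ω, D1 ω = 0 ∨ D1 ω = 1) (hD0v : ∀ ω, D0 ω = 0 ∨ D0 ω = 1)
    (hZv : ∀ ω, Z ω = 0 ∨ Z ω = 1)
    (hD1m : Measurable D1) (hD0m : Measurable D0) (hZm : Measurable Z)
    (D : Ω → ℝ) (hD : ∀ ω, D ω = D1 ω * Z ω + D0 ω * (1 - Z ω))
    (Yo : Ω → ℝ) (hYo : ∀ ω, Yo ω = Y1 ω * D ω + Y0 ω * (1 - D ω))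
    (hmono : ∀ᵐ ω ∂μ, D0 ω ≤ D1 ω)
    (hindep : IndepFun Z (fun ω => (Y1 ω, Y0 ω, D1 ω, D0 ω)) μ)
    (hrel : 0 < pr μ {ω | D0 ω < D1 ω})
    (hZpos : 0 < pr μ (evEq Z 1)) (hZlt : pr μ (evEq Z 1) < 1) :
    cexp μ {ω | D0 ω < D1 ω} (fun ω => Y1 ω - Y0 ω)
      = (cexp μ (evEq Z 1) Yo - cexp μ (evEq Z 0) Yo)
        / (cexp μ (evEq Z 1) D - cexp μ (evEq Z 0) D) := by
  classical
  set W : Ω → ℝ × ℝ × ℝ × ℝ := fun ω => (Y1 ω, Y0 ω, D1 ω, D0 ω) with hW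
  -- the complier set
  have hCPeq : {ω | D0 ω < D1 ω} = CPset D1 D0 := by
    ext ω
    rcases hD1v ω with h1 | h1 <;> rcases hD0v ω with h0 | h0 <;>
      simp [CPset, h1, h0] <;> try norm_num
  have hCPm : MeasurableSet (CPset D1 D0) := by
    have : CPset D1 D0 = D1 ⁻¹' {1} ∩ D0 ⁻¹' {0} := by ext ω; simp [CPset]; try tauto
    rw [this]
    exact (hD1m (measurableSet_singleton 1)).inter (hD0m (measurableSet_singleton 0))
  -- positivity of Z = 0 event
  have hE1m : MeasurableSet (evEq Z 1) := hZm (measurableSet_singleton 1)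
  have hE0c : evEq Z 0 = (evEq Z 1)ᶜ := by
    ext ω; rcases hZv ω with h | h <;> simp [evEq, h] <;> try norm_num
  have hpr0 : pr μ (evEq Z 0) = 1 - pr μ (evEq Z 1) := by
    rw [hE0c, pr, pr, prob_compl_eq_one_sub hE1m,
      ENNReal.toReal_sub_of_le prob_le_one (by simp)]
    simp
  -- measurability / integrability facts
  have hD1int : Integrable D1 μ := by
    refine (integrable_const (1 : ℝ)).mono' hD1m.aestronglyMeasurable ?_
    exact ae_of_all _ fun ω => by rcases hD1v ω with h | h <;> simp [h]
  have hD0int : Integrable D0 μ := by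
    refine (integrable_const (1 : ℝ)).mono' hD0m.aestronglyMeasurable ?_
    exact ae_of_all _ fun ω => by rcases hD0v ω with h | h <;> simp [h]
  have hprod : ∀ (Yi Di : Ω → ℝ), Integrable Yi μ → Measurable Di →
      (∀ ω, Di ω = 0 ∨ Di ω = 1) → Integrable (fun ω => Yi ω * Di ω) μ := by
    intro Yi Di hYi hDi hDiv
    have : Integrable (fun ω => Di ω * Yi ω) μ := hYi.bdd_mul (c := 1) hDi.aestronglyMeasurable
      (ae_of_all _ fun ω => by rcases hDiv ω with h | h <;> simp [h])
    exact this.congr (ae_of_all _ fun ω => mul_comm _ _)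
  have hprod' : ∀ (Yi Di : Ω → ℝ), Integrable Yi μ → Measurable Di →
      (∀ ω, Di ω = 0 ∨ Di ω = 1) → Integrable (fun ω => Yi ω * (1 - Di ω)) μ := by
    intro Yi Di hYi hDi hDiv
    have : Integrable (fun ω => (1 - Di ω) * Yi ω) μ :=
      hYi.bdd_mul (c := 1) (measurable_const.sub hDi).aestronglyMeasurable
        (ae_of_all _ fun ω => by rcases hDiv ω with h | h <;> simp [h])
    exact this.congr (ae_of_all _ fun ω => mul_comm _ _)
  -- the functions of W giving Yo and D on the two Z-events
  set g1 : ℝ × ℝ × ℝ × ℝ → ℝ := fun p => p.1 * p.2.2.1 + p.2.1 * (1 - p.2.2.1) with hg1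
  set g0 : ℝ × ℝ × ℝ × ℝ → ℝ := fun p => p.1 * p.2.2.2 + p.2.1 * (1 - p.2.2.2) with hg0
  set d1 : ℝ × ℝ × ℝ × ℝ → ℝ := fun p => p.2.2.1 with hd1
  set d0 : ℝ × ℝ × ℝ × ℝ → ℝ := fun p => p.2.2.2 with hd0
  have hg1m : Measurable g1 := by fun_prop
  have hg0m : Measurable g0 := by fun_prop
  have hd1m : Measurable d1 := by fun_prop
  have hd0m : Measurable d0 := by fun_prop
  have hg1int : Integrable (fun ω => g1 (W ω)) μ :=
    (hprod Y1 D1 hY1int hD1m hD1v).add (hprod' Y0 D1 hY0int hD1m hD1v)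
  have hg0int : Integrable (fun ω => g0 (W ω)) μ :=
    (hprod Y1 D0 hY1int hD0m hD0v).add (hprod' Y0 D0 hY0int hD0m hD0v)
  -- cexp over Z-events of Yo and D
  have keyY : ∀ (c : ℝ) (h : Ω → ℝ) (g : ℝ × ℝ × ℝ × ℝ → ℝ), Measurable g →
      Integrable (fun ω => g (W ω)) μ → (∀ ω ∈ evEq Z c, h ω = g (W ω)) →
      0 < pr μ (evEq Z c) →
      cexp μ (evEq Z c) h = ∫ ω, g (W ω) ∂μ := by
    intro c h g hgm hgint hagree hpos
    have hAm : MeasurableSet (evEq Z c) := hZm (measurableSet_singleton c)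
    rw [cexp_eq_div, setIntegral_congr_fun hAm hagree,
      indep_setIntegral μ Z W hZm hindep c g hgm hgint, mul_comm,
      mul_div_assoc, div_self (ne_of_gt hpos), mul_one]
  have hpr0pos : 0 < pr μ (evEq Z 0) := by rw [hpr0]; linarith
  have hYo1 : cexp μ (evEq Z 1) Yo = ∫ ω, g1 (W ω) ∂μ := by
    refine keyY 1 Yo g1 hg1m hg1int (fun ω hω => ?_) hZpos
    have hz : Z ω = 1 := hω
    simp [hYo ω, hD ω, hz, g1, W]
  have hYo0 : cexp μ (evEq Z 0) Yo = ∫ ω, g0 (W ω) ∂μ := by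
    refine keyY 0 Yo g0 hg0m hg0int (fun ω hω => ?_) hpr0pos
    have hz : Z ω = 0 := hω
    simp [hYo ω, hD ω, hz, g0, W]
  have hD1c : cexp μ (evEq Z 1) D = ∫ ω, d1 (W ω) ∂μ := by
    refine keyY 1 D d1 hd1m (by simpa [d1, W] using hD1int) (fun ω hω => ?_) hZpos
    have hz : Z ω = 1 := hω
    simp [hD ω, hz, d1, W]
  have hD0c : cexp μ (evEq Z 0) D = ∫ ω, d0 (W ω) ∂μ := by
    refine keyY 0 D d0 hd0m (by simpa [d0, W] using hD0int) (fun ω hω => ?_) hpr0pos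
    have hz : Z ω = 0 := hω
    simp [hD ω, hz, d0, W]
  -- denominator
  have hden : (∫ ω, d1 (W ω) ∂μ) - ∫ ω, d0 (W ω) ∂μ = pr μ (CPset D1 D0) := by
    have hsub : (∫ ω, d1 (W ω) ∂μ) - ∫ ω, d0 (W ω) ∂μ
        = ∫ ω, (D1 ω - D0 ω) ∂μ := by
      rw [← integral_sub (by simpa [d1, W] using hD1int) (by simpa [d0, W] using hD0int)]
      try rfl
    have hae : (fun ω => D1 ω - D0 ω)
        =ᵐ[μ] Set.indicator (CPset D1 D0) (1 : Ω → ℝ) := by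
      filter_upwards [hmono] with ω h
      rcases hD1v ω with h1 | h1 <;> rcases hD0v ω with h0 | h0 <;>
        simp [Set.indicator_apply, CPset, h1, h0] at * <;> linarith
    rw [hsub, integral_congr_ae hae, integral_indicator_one hCPm, pr, measureReal_def]
  -- numerator
  have hnum : (∫ ω, g1 (W ω) ∂μ) - ∫ ω, g0 (W ω) ∂μ
      = ∫ ω in CPset D1 D0, (Y1 ω - Y0 ω) ∂μ := by
    have hsub : (∫ ω, g1 (W ω) ∂μ) - ∫ ω, g0 (W ω) ∂μ
        = ∫ ω, ((Y1 ω - Y0 ω) * (D1 ω - D0 ω)) ∂μ := by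
      rw [← integral_sub hg1int hg0int]
      congr 1; funext ω; simp only [g1, g0, W]; ring
    have hae : (fun ω => (Y1 ω - Y0 ω) * (D1 ω - D0 ω))
        =ᵐ[μ] Set.indicator (CPset D1 D0) (fun ω => Y1 ω - Y0 ω) := by
      filter_upwards [hmono] with ω h
      rcases hD1v ω with h1 | h1 <;> rcases hD0v ω with h0 | h0 <;>
        simp [Set.indicator_apply, CPset, h1, h0] at * <;> linarith
    rw [hsub, integral_congr_ae hae, integral_indicator hCPm]
  rw [hYo1, hYo0, hD1c, hD0c, hnum, hden, cexp_eq_div, hCPeq]
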